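/- Let G be a locally finite graph in which every ball of radius n has at most b(n) vertices, for some function b : ℕ → ℕ. If G has a thick end, then for every k the robber has a winning strategy against k cops in the weak Cops-and-Robber game on G; in particular the weak cop number of G is infinite. -/

import Mathlib

open SimpleGraph

universe u

variable {V : Type u}

/-- The ball of radius `n` around `v`: vertices reachable from `v` at geodesic distance at most `n`. -/
def gBall (G : SimpleGraph V) (v : V) (n : ℕ) : Set V :=
  {u | G.Reachable v u ∧ G.dist v u ≤ n}

/-- A ray: a one-sided infinite path, given by an injective map `ℕ → V` with consecutive
vertices adjacent. -/
def IsRay (G : SimpleGraph V) (f : ℕ → V) : Prop :=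
  Function.Injective f ∧ ∀ n, G.Adj (f n) (f (n + 1))

/-- A nonempty finite path given as a list of pairwise distinct vertices with consecutive
vertices adjacent. -/
def IsPathList (G : SimpleGraph V) (l : List V) : Prop :=
  l ≠ [] ∧ l.Chain' G.Adj ∧ l.Nodup

/-- A finite path joining the vertex set `A` to the vertex set `B`. -/
def Joins (G : SimpleGraph V) (A B : Set V) (l : List V) : Prop :=
  IsPathList G l ∧ (∃ a ∈ A, l.head? = some a) ∧ ∃ b ∈ B, l.getLast? = some b

/-- Two rays lie in the same end iff they are joined by infinitely many pairwise
vertex-disjoint paths. -/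
def SameEnd (G : SimpleGraph V) (f g : ℕ → V) : Prop :=
  ∃ F : ℕ → List V,
    (∀ i, Joins G (Set.range f) (Set.range g) (F i)) ∧
    ∀ i j, i ≠ j → ∀ v, v ∈ F i → v ∉ F j

/-- The end represented by the ray `r` is thick: it contains arbitrarily large families of
pairwise vertex-disjoint rays. -/
def ThickEnd (G : SimpleGraph V) (r : ℕ → V) : Prop :=
  ∀ n : ℕ, ∃ F : Fin n → ℕ → V,
    (∀ i, IsRay G (F i)) ∧ (∀ i, SameEnd G (F i) r) ∧
    ∀ i j, i ≠ j → Disjoint (Set.range (F i)) (Set.range (F j))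

/-- A graph is vertex transitive if its automorphism group acts transitively on vertices. -/
def VertexTransitive (G : SimpleGraph V) : Prop :=
  ∀ u v : V, ∃ e : G ≃g G, e u = v

/-- The robber-position history after the robber's move number `t`:
`[r t, r (t-1), ..., r 0]`. -/
def histList (r : ℕ → V) (t : ℕ) : List V :=
  ((List.range (t + 1)).map r).reverse

/-- A cop strategy for `k` cops (a function of the robber-position history) is legal for
speed `s_c` if each cop moves distance at most `s_c` per round. -/
def CopLegal (G : SimpleGraph V) (k s_c : ℕ) (S : List V → Fin k → V) : Prop :=
  ∀ (h : List V) (u : V) (i : Fin k), G.dist (S h i) (S (u :: h) i) ≤ s_c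

/-- A legal robber play against the cop strategy `S`: the robber starts at distance `> ρ`
from every cop, and in each round moves along a path of length at most `s_r` all of whose
vertices stay at distance `> ρ` from every cop. -/
def RobberPlayLegal (G : SimpleGraph V) (k s_r ρ : ℕ) (S : List V → Fin k → V)
    (r : ℕ → V) (w : ℕ → List V) : Prop :=
  (∀ i : Fin k, ρ < G.dist (S [] i) (r 0)) ∧
  ∀ t : ℕ, (w t).Chain' G.Adj ∧ (w t).head? = some (r t) ∧
    (w t).getLast? = some (r (t + 1)) ∧ (w t).length ≤ s_r + 1 ∧
    ∀ u ∈ w t, ∀ i : Fin k, ρ < G.dist (S (histList r t) i) u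

/-- The robber visits the ball `B(R, v)` infinitely often. -/
def RobberVisits (G : SimpleGraph V) (v : V) (R : ℕ) (r : ℕ → V) : Prop :=
  ∀ N : ℕ, ∃ t : ℕ, N ≤ t ∧ r t ∈ gBall G v R

/-- In the weak game, after the cops fix speed `s_c` and capture radius `ρ`, the robber can
choose a speed `s_r`, a base vertex `v` and a radius `R > ρ` and defeat every legal
cop strategy for `k` cops. -/
def RobberBeats (G : SimpleGraph V) (k s_c ρ : ℕ) : Prop :=
  ∃ s_r : ℕ, ∃ v : V, ∃ R : ℕ, ρ < R ∧
    ∀ S : List V → Fin k → V, CopLegal G k s_c S →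
      ∃ r w, RobberPlayLegal G k s_r ρ S r w ∧ RobberVisits G v R r

/-- The robber wins the weak game against `k` cops. -/
def RobberWinsWeak (G : SimpleGraph V) (k : ℕ) : Prop :=
  ∀ s_c ρ : ℕ, RobberBeats G k s_c ρ

/-- `k` cops win the weak game: the cops can choose `s_c` and `ρ` so that for every choice
of `s_r`, `v` and `R > ρ` by the robber there is a legal cop strategy against which no
legal robber play visits `B(R, v)` infinitely often. -/
def CopsWinWeak (G : SimpleGraph V) (k : ℕ) : Prop :=
  ∃ s_c ρ : ℕ, ∀ (s_r : ℕ) (v : V) (R : ℕ), ρ < R →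
    ∃ S : List V → Fin k → V, CopLegal G k s_c S ∧
      ∀ r w, RobberPlayLegal G k s_r ρ S r w → ¬ RobberVisits G v R r

namespace WcopAux

variable {G : SimpleGraph V}

lemma head?_support {u v : V} (p : G.Walk u v) : p.support.head? = some u := by
  rw [Walk.support_eq_cons]; rfl

lemma getLast?_support {u v : V} (p : G.Walk u v) : p.support.getLast? = some v := by
  rw [List.getLast?_eq_getLast (Walk.support_ne_nil p), Walk.getLast_support]

lemma exists_walk_of_list :
    ∀ (l : List V) {x y : V}, l.Chain' G.Adj → l.head? = some x → l.getLast? = some y →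
      ∃ w : G.Walk x y, w.support = l
  | [], _, _, _, hh, _ => by simp at hh
  | [a], x, y, _, hh, hl => by
    simp only [List.head?_cons, Option.some.injEq] at hh
    simp only [List.getLast?_singleton, Option.some.injEq] at hl
    cases hh; cases hl
    exact ⟨Walk.nil, by simp⟩
  | a :: b :: rest, x, y, hc, hh, hl => by
    simp only [List.head?_cons, Option.some.injEq] at hh
    cases hh
    have hadj : G.Adj a b := (List.isChain_cons_cons.mp hc).1
    have hc' : (b :: rest).Chain' G.Adj := (List.isChain_cons_cons.mp hc).2
    have hl' : (b :: rest).getLast? = some y := by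
      rwa [List.getLast?_cons_cons] at hl
    obtain ⟨w, hw⟩ := exists_walk_of_list (b :: rest) hc' rfl hl'
    exact ⟨Walk.cons hadj w, by simp [hw]⟩

/-- Walk along a "ray-like" function from `f x` to `f (x + d)`. -/
def raySeg (f : ℕ → V) (hf : ∀ n, G.Adj (f n) (f (n + 1))) (x : ℕ) :
    (d : ℕ) → G.Walk (f x) (f (x + d))
  | 0 => Walk.nil
  | d + 1 => (raySeg f hf x d).concat (hf (x + d))

lemma raySeg_support (f : ℕ → V) (hf : ∀ n, G.Adj (f n) (f (n + 1))) (x : ℕ) :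
    ∀ d, ∀ u ∈ (raySeg f hf x d).support, ∃ i, x ≤ i ∧ i ≤ x + d ∧ u = f i
  | 0 => by
    intro u hu
    simp only [raySeg, Walk.support_nil, List.mem_singleton] at hu
    exact ⟨x, le_rfl, by omega, hu⟩
  | d + 1 => by
    intro u hu
    simp only [raySeg, Walk.support_concat, List.concat_eq_append, List.mem_append,
      List.mem_singleton] at hu
    rcases hu with hu | hu
    · obtain ⟨i, h1, h2, h3⟩ := raySeg_support f hf x d u hu
      exact ⟨i, h1, by omega, h3⟩
    · exact ⟨x + (d + 1), by omega, by omega, hu⟩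

/-- Walk along a ray-like function between arbitrary indices. -/
noncomputable def rIdxWalk (f : ℕ → V) (hf : ∀ n, G.Adj (f n) (f (n + 1))) (x y : ℕ) :
    G.Walk (f x) (f y) :=
  if h : x ≤ y then (raySeg f hf x (y - x)).copy rfl (congrArg f (by omega))
  else ((raySeg f hf y (x - y)).copy rfl (congrArg f (by omega))).reverse

lemma rIdxWalk_support (f : ℕ → V) (hf : ∀ n, G.Adj (f n) (f (n + 1))) (x y : ℕ) :
    ∀ u ∈ (rIdxWalk f hf x y).support, ∃ i, min x y ≤ i ∧ i ≤ max x y ∧ u = f i := by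
  intro u hu
  unfold rIdxWalk at hu
  split_ifs at hu with h
  · rw [Walk.support_copy] at hu
    obtain ⟨i, h1, h2, h3⟩ := raySeg_support f hf x (y - x) u hu
    exact ⟨i, by omega, by omega, h3⟩
  · rw [Walk.support_reverse, List.mem_reverse, Walk.support_copy] at hu
    obtain ⟨i, h1, h2, h3⟩ := raySeg_support f hf y (x - y) u hu
    exact ⟨i, by omega, by omega, h3⟩

/-- Walk along a ray-like function from `f 0` to `f a`. -/
noncomputable def rayW (f : ℕ → V) (hf : ∀ n, G.Adj (f n) (f (n + 1))) (a : ℕ) :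
    G.Walk (f 0) (f a) := rIdxWalk f hf 0 a

lemma rayW_support (f : ℕ → V) (hf : ∀ n, G.Adj (f n) (f (n + 1))) (a : ℕ) :
    ∀ u ∈ (rayW f hf a).support, ∃ i, i ≤ a ∧ u = f i := by
  intro u hu
  obtain ⟨i, h1, h2, h3⟩ := rIdxWalk_support f hf 0 a u hu
  exact ⟨i, by omega, h3⟩

lemma ball_finite (hlf : ∀ x : V, (G.neighborSet x).Finite)
    (x : V) : ∀ n : ℕ, (gBall G x n).Finite := by
  intro n
  induction n with
  | zero =>
    apply Set.Finite.subset (Set.finite_singleton x)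
    rintro u ⟨hreach, hd⟩
    have : G.dist x u = 0 := Nat.le_zero.mp hd
    exact Set.mem_singleton_iff.mpr (hreach.dist_eq_zero_iff.mp this).symm
  | succ n ih =>
    apply Set.Finite.subset (ih.union ((ih.biUnion (fun y _ => hlf y))))
    rintro u ⟨hreach, hd⟩
    rcases Nat.lt_or_ge (G.dist x u) (n + 1) with h | h
    · exact Or.inl ⟨hreach, by omega⟩
    · have hdist : G.dist x u = n + 1 := by omega
      obtain ⟨w, hw⟩ := hreach.exists_walk_length_eq_dist
      right
      rw [hdist] at hw
      have hrev : w.reverse.length = n + 1 := by simp [hw]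
      cases hcase : w.reverse with
      | nil => rw [hcase] at hrev; simp at hrev
      | cons hadj q =>
        rename_i y
        rw [hcase] at hrev
        simp only [Walk.length_cons, Nat.add_right_cancel_iff] at hrev
        have hy : y ∈ gBall G x n := by
          refine ⟨q.reverse.reachable, ?_⟩
          have := SimpleGraph.dist_le q.reverse
          simpa [hrev] using this
        exact Set.mem_biUnion hy (by exact hadj.symm)

/-- Among more than `k * b ρ'` pairwise disjoint sets, at least one is entirely at
distance `> ρ'` from all of the `k` cops. -/
lemma exists_clean_of_disjoint {k m : ℕ} (hconn : G.Connected)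
    (hlf : ∀ x : V, (G.neighborSet x).Finite)
    {b : ℕ → ℕ} (hb : ∀ (x : V) (n : ℕ), (gBall G x n).ncard ≤ b n)
    (c : Fin k → V) (ρ' : ℕ) (hm : k * b ρ' < m)
    (D : Fin m → Set V) (hdisj : ∀ i j, i ≠ j → Disjoint (D i) (D j)) :
    ∃ i, ∀ x ∈ D i, ∀ κ, ρ' < G.dist (c κ) x := by
  classical
  by_contra hcon
  push_neg at hcon
  choose g hg1 κf hκ using hcon
  have hinj : Function.Injective g := by
    intro i j hij
    by_contra hne
    exact Set.disjoint_left.mp (hdisj i j hne) (hg1 i) (hij ▸ hg1 j)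
  have hmaps : ∀ i ∈ (Finset.univ : Finset (Fin m)), κf i ∈ (Finset.univ : Finset (Fin k)) :=
    fun i _ => Finset.mem_univ _
  have hcard : (Finset.univ : Finset (Fin k)).card * b ρ' <
      (Finset.univ : Finset (Fin m)).card := by
    simpa using hm
  obtain ⟨j, -, hj⟩ :=
    Finset.exists_lt_card_fiber_of_mul_lt_card_of_maps_to hmaps hcard
  set F := Finset.univ.filter (fun i => κf i = j) with hF
  have hsub : ↑(F.image g) ⊆ gBall G (c j) ρ' := by
    intro x hx
    simp only [Finset.coe_image, Set.mem_image, Finset.mem_coe, hF,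
      Finset.mem_filter, Finset.mem_univ, true_and] at hx
    obtain ⟨i, hi, rfl⟩ := hx
    exact ⟨hconn (c j) (g i), by rw [← hi]; exact hκ i⟩
  have hle := Set.ncard_le_ncard hsub (ball_finite hlf (c j) ρ')
  rw [Set.ncard_coe_finset, Finset.card_image_of_injective F hinj] at hle
  have := hb (c j) ρ'
  omega

lemma histList_succ (f : ℕ → V) (t : ℕ) : histList f (t + 1) = f (t + 1) :: histList f t := by
  simp [histList, List.range_succ]

lemma histList_zero (f : ℕ → V) : histList f 0 = [f 0] := rfl

end WcopAux

/-- If every ball of radius `n` of a connected locally finite graph has at most `b n`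
vertices and the graph has a thick end, then for every `k` the robber wins the weak
Cops-and-Robber game against `k` cops; in particular the weak cop number is infinite. -/
theorem stmt7 (G : SimpleGraph V) (hconn : G.Connected)
    (hlf : ∀ x : V, (G.neighborSet x).Finite)
    (b : ℕ → ℕ) (hb : ∀ (x : V) (n : ℕ), (gBall G x n).ncard ≤ b n)
    (r : ℕ → V) (hr : IsRay G r) (hthick : ThickEnd G r) :
    ∀ k : ℕ, RobberWinsWeak G k := by
  classical
  intro k s_c ρ
  set m := k * b (ρ + s_c) + 1 with hmdef
  have hm0 : 0 < m := Nat.succ_pos _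
  haveI : NeZero m := ⟨by omega⟩
  obtain ⟨F, hFray, hFend, hFdisj⟩ := hthick m
  choose P hPJoins hPdisj using hFend
  have hchain : ∀ (i : Fin m) n, (P i n).Chain' G.Adj := fun i n => (hPJoins i n).1.2.1
  have hhead : ∀ (i : Fin m) n, ∃ a, (P i n).head? = some (F i a) := by
    intro i n
    obtain ⟨-, ⟨x, hx, hh⟩, -⟩ := hPJoins i n
    obtain ⟨a, rfl⟩ := hx
    exact ⟨a, hh⟩
  choose αf hαf using hhead
  have hlast : ∀ (i : Fin m) n, ∃ a, (P i n).getLast? = some (r a) := by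
    intro i n
    obtain ⟨-, -, ⟨x, hx, hh⟩⟩ := hPJoins i n
    obtain ⟨a, rfl⟩ := hx
    exact ⟨a, hh⟩
  choose af haf using hlast
  have hlastmem : ∀ (i : Fin m) n, r (af i n) ∈ P i n := by
    intro i n
    have h := haf i n
    rw [List.getLast?_eq_getLast (hPJoins i n).1.1] at h
    rw [← Option.some.injEq _ _ |>.mp h]
    exact List.getLast_mem _
  have hafinj : ∀ i : Fin m, Function.Injective (af i) := by
    intro i n n' h
    by_contra hne
    have h1 := hlastmem i n
    have h2 := hlastmem i n'
    rw [h] at h1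
    exact hPdisj i n n' hne _ h1 h2
  -- availability of fresh connecting paths
  have avail : ∀ (U : Set V), U.Finite → ∀ i : Fin m,
      ∃ n, (∀ x ∈ P i n, x ∉ U) ∧ (∀ y : ℕ, af i n ≤ y → r y ∉ U) := by
    intro U hU i
    have hBad1 : {n : ℕ | ∃ x ∈ P i n, x ∈ U}.Finite := by
      have hsub : {n : ℕ | ∃ x ∈ P i n, x ∈ U} ⊆ ⋃ u ∈ U, {n : ℕ | u ∈ P i n} := by
        rintro n ⟨x, hx1, hx2⟩
        exact Set.mem_biUnion hx2 hx1
      refine Set.Finite.subset (hU.biUnion fun u _ => ?_) hsub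
      apply Set.Subsingleton.finite
      intro a ha b hb
      by_contra hne
      exact hPdisj i a b hne u ha hb
    obtain ⟨θ, hθ2⟩ : ∃ θ : ℕ, ∀ y, r y ∈ U → y ≤ θ := by
      have hθ : {y : ℕ | r y ∈ U}.Finite :=
        Set.Finite.preimage (Set.injOn_of_injective hr.1) hU
      exact ⟨hθ.toFinset.sup id, fun y hy =>
        Finset.le_sup (f := id) (by simp only [Set.Finite.mem_toFinset, Set.mem_setOf_eq]; exact hy)⟩
    have hBad2 : {n : ℕ | af i n ≤ θ}.Finite :=
      Set.Finite.preimage (Set.injOn_of_injective (hafinj i)) (Set.finite_Iic θ)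
    obtain ⟨n, hn⟩ := ((hBad1.union hBad2).infinite_compl).nonempty
    simp only [Set.mem_compl_iff, Set.mem_union, Set.mem_setOf_eq, not_or, not_exists,
      not_and, not_le] at hn
    refine ⟨n, fun x hx hxU => hn.1 x hx hxU, fun y hy hyU => ?_⟩
    have := hθ2 y hyU
    omega
  choose pickP hpickP1 hpickP2 using avail
  -- gadgets
  have hm0' : (Finset.univ : Finset (Fin m)).Nonempty := Finset.univ_nonempty
  let lo : (Fin m → ℕ) → ℕ := fun g => Finset.univ.inf' hm0' (fun i => af i (g i))
  let hi : (Fin m → ℕ) → ℕ := fun g => Finset.univ.sup' hm0' (fun i => af i (g i))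
  let GS : (Fin m → ℕ) → Set V :=
    fun g => (⋃ i, {x | x ∈ P i (g i)}) ∪ (r '' Set.Icc (lo g) (hi g))
  have hGSfin : ∀ g, (GS g).Finite := by
    intro g
    apply Set.Finite.union
    · exact Set.finite_iUnion (fun i => (P i (g i)).finite_toSet)
    · exact (Set.finite_Icc _ _).image _
  let used : List (Fin m → ℕ) → Set V := fun L => ⋃ g ∈ L, GS g
  have husedfin : ∀ L, (used L).Finite :=
    fun L => Set.Finite.biUnion L.finite_toSet (fun g _ => hGSfin g)
  let newG : List (Fin m → ℕ) → Fin m → ℕ := fun L i => pickP (used L) (husedfin L) i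
  have hnewG : ∀ L, ∀ x ∈ GS (newG L), x ∉ used L := by
    intro L x hx
    rcases hx with hx | hx
    · obtain ⟨i, hi'⟩ := Set.mem_iUnion.mp hx
      exact hpickP1 (used L) (husedfin L) i x hi'
    · obtain ⟨y, hy, rfl⟩ := hx
      obtain ⟨i0, -, hi0⟩ := Finset.exists_mem_eq_inf' hm0' (fun i => af i (newG L i))
      exact hpickP2 (used L) (husedfin L) i0 y (by rw [← hi0]; exact hy.1)
  let levels : ℕ → List (Fin m → ℕ) :=
    fun t => Nat.rec (motive := fun _ => List (Fin m → ℕ)) [] (fun _ L => newG L :: L) t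
  set T := k * b ρ + 1 with hTdef
  have hT0 : 0 < T := Nat.succ_pos _
  have hlevlen : ∀ t, (levels t).length = t := by
    intro t
    induction t with
    | zero => rfl
    | succ t ih =>
      show (newG (levels t) :: levels t).length = t + 1
      simp [ih]
  have hlevPW : ∀ t, (levels t).Pairwise (fun g g' => Disjoint (GS g) (GS g')) := by
    intro t
    induction t with
    | zero => exact List.Pairwise.nil
    | succ t ih =>
      refine List.pairwise_cons.mpr ⟨?_, ih⟩
      intro g' hg'
      rw [Set.disjoint_left]
      intro x hx hx'
      exact hnewG (levels t) x hx (Set.mem_biUnion hg' hx')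
  let gad : Fin T → (Fin m → ℕ) := fun τ => (levels T).get ⟨τ.1, lt_of_lt_of_le τ.2 (hlevlen T).ge⟩
  have hGdisj : ∀ τ τ' : Fin T, τ ≠ τ' → Disjoint (GS (gad τ)) (GS (gad τ')) := by
    intro τ τ' hne
    have hpw := List.pairwise_iff_get.mp (hlevPW T)
    have hvne : τ.1 ≠ τ'.1 := fun h => hne (Fin.ext h)
    rcases Nat.lt_or_ge τ.1 τ'.1 with h | h
    · exact hpw ⟨τ.1, lt_of_lt_of_le τ.2 (hlevlen T).ge⟩ ⟨τ'.1, lt_of_lt_of_le τ'.2 (hlevlen T).ge⟩ h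
    · have h' : τ'.1 < τ.1 := by omega
      exact (hpw ⟨τ'.1, lt_of_lt_of_le τ'.2 (hlevlen T).ge⟩ ⟨τ.1, lt_of_lt_of_le τ.2 (hlevlen T).ge⟩ h').symm
  -- the ray truncations
  let A : ℕ := Finset.sup Finset.univ (fun p : Fin T × Fin m => αf p.2 (gad p.1 p.2))
  let D : Fin m → Set V := fun i => F i '' Set.Iic A
  have hDdisj : ∀ i j : Fin m, i ≠ j → Disjoint (D i) (D j) := by
    intro i j hij
    exact Set.disjoint_of_subset (Set.image_subset_range _ _) (Set.image_subset_range _ _)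
      (hFdisj i j hij)
  -- walks realizing the connecting paths
  have hwalks : ∀ (i : Fin m) n, ∃ w : G.Walk (F i (αf i n)) (r (af i n)), w.support = P i n :=
    fun i n => WcopAux.exists_walk_of_list _ (hchain i n) (hαf i n) (haf i n)
  choose PW hPW using hwalks
  -- routes
  let route : (τ : Fin T) → (i j : Fin m) → G.Walk (F i 0) (F j 0) := fun τ i j =>
    (WcopAux.rayW (F i) (hFray i).2 (αf i (gad τ i))).append
      ((PW i (gad τ i)).append
        ((WcopAux.rIdxWalk r hr.2 (af i (gad τ i)) (af j (gad τ j))).append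
          ((PW j (gad τ j)).reverse.append
            (WcopAux.rayW (F j) (hFray j).2 (αf j (gad τ j))).reverse)))
  have hroute_sub : ∀ (τ : Fin T) (i j : Fin m), ∀ u ∈ (route τ i j).support,
      u ∈ D i ∨ u ∈ GS (gad τ) ∨ u ∈ D j := by
    intro τ i j u hu
    rw [Walk.mem_support_append_iff] at hu
    rcases hu with hu | hu
    · obtain ⟨x, hx, rfl⟩ := WcopAux.rayW_support _ _ _ u hu
      refine Or.inl ⟨x, ?_, rfl⟩
      have : αf i (gad τ i) ≤ A := Finset.le_sup (f := fun p : Fin T × Fin m => αf p.2 (gad p.1 p.2))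
        (Finset.mem_univ (τ, i))
      exact Set.mem_Iic.mpr (by omega)
    rw [Walk.mem_support_append_iff] at hu
    rcases hu with hu | hu
    · rw [hPW] at hu
      exact Or.inr (Or.inl (Set.mem_union_left _ (Set.mem_iUnion.mpr ⟨i, hu⟩)))
    rw [Walk.mem_support_append_iff] at hu
    rcases hu with hu | hu
    · obtain ⟨y, h1, h2, rfl⟩ := WcopAux.rIdxWalk_support r hr.2 _ _ u hu
      refine Or.inr (Or.inl (Set.mem_union_right _ ⟨y, ⟨?_, ?_⟩, rfl⟩))
      · have hl1 : lo (gad τ) ≤ af i (gad τ i) := Finset.inf'_le _ (Finset.mem_univ i)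
        have hl2 : lo (gad τ) ≤ af j (gad τ j) := Finset.inf'_le _ (Finset.mem_univ j)
        omega
      · have hl1 : af i (gad τ i) ≤ hi (gad τ) := Finset.le_sup' (fun l => af l (gad τ l)) (Finset.mem_univ i)
        have hl2 : af j (gad τ j) ≤ hi (gad τ) := Finset.le_sup' (fun l => af l (gad τ l)) (Finset.mem_univ j)
        omega
    rw [Walk.mem_support_append_iff] at hu
    rcases hu with hu | hu
    · rw [Walk.support_reverse, List.mem_reverse, hPW] at hu
      exact Or.inr (Or.inl (Set.mem_union_left _ (Set.mem_iUnion.mpr ⟨j, hu⟩)))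
    · rw [Walk.support_reverse, List.mem_reverse] at hu
      obtain ⟨x, hx, rfl⟩ := WcopAux.rayW_support _ _ _ u hu
      refine Or.inr (Or.inr ⟨x, ?_, rfl⟩)
      have : αf j (gad τ j) ≤ A := Finset.le_sup (f := fun p : Fin T × Fin m => αf p.2 (gad p.1 p.2))
        (Finset.mem_univ (τ, j))
      exact Set.mem_Iic.mpr (by omega)
  -- the robber's parameters
  let s_r : ℕ := Finset.sup Finset.univ
    (fun p : Fin T × Fin m × Fin m => (route p.1 p.2.1 p.2.2).length)
  let i₀ : Fin m := ⟨0, hm0⟩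
  let v0 : V := F i₀ 0
  let X : ℕ := Finset.sup Finset.univ (fun i : Fin m => G.dist v0 (F i 0))
  refine ⟨s_r, v0, ρ + 1 + X, by omega, ?_⟩
  intro S hS
  -- choice of clean ray / clean gadget
  have pickRay : ∀ c : Fin k → V, ∃ i, ∀ x ∈ D i, ∀ κ, ρ + s_c < G.dist (c κ) x :=
    fun c => WcopAux.exists_clean_of_disjoint hconn hlf hb c (ρ + s_c) (by omega) D hDdisj
  choose pr hpr using pickRay
  have pickGad : ∀ c : Fin k → V, ∃ τ : Fin T, ∀ x ∈ GS (gad τ), ∀ κ, ρ < G.dist (c κ) x :=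
    fun c => WcopAux.exists_clean_of_disjoint hconn hlf hb c ρ (by omega)
      (fun τ => GS (gad τ)) hGdisj
  choose pg hpg using pickGad
  -- the robber's play
  let step : List V × Fin m → List V × Fin m :=
    fun p => (F (pr (S p.1)) 0 :: p.1, pr (S p.1))
  let hist : ℕ → List V × Fin m :=
    fun t => Nat.rec (motive := fun _ => List V × Fin m)
      (([F (pr (S [])) 0], pr (S []))) (fun _ p => step p) t
  let rb : ℕ → V := fun t => F (hist t).2 0
  have hist_succ1 : ∀ t, (hist (t + 1)).1 = rb (t + 1) :: (hist t).1 := fun t => rfl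
  have hist_succ2 : ∀ t, (hist (t + 1)).2 = pr (S (hist t).1) := fun t => rfl
  have hh : ∀ t, histList rb t = (hist t).1 := by
    intro t
    induction t with
    | zero => rw [WcopAux.histList_zero]; rfl
    | succ t ih => rw [WcopAux.histList_succ, ih, hist_succ1]
  have hmemD : ∀ (i : Fin m), F i 0 ∈ D i := fun i => ⟨0, Set.mem_Iic.mpr (Nat.zero_le _), rfl⟩
  -- the invariant: the robber's current position's whole ray is clean for the current cops
  have hinv : ∀ t, ∀ x ∈ D (hist t).2, ∀ κ, ρ < G.dist (S (hist t).1 κ) x := by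
    intro t
    cases t with
    | zero =>
      intro x hx κ
      have h1 := hpr (S []) x hx κ
      have h2 := hS [] (rb 0) κ
      have h3 := hconn.dist_triangle (u := S [] κ) (v := S [rb 0] κ) (w := x)
      have e0 : (hist 0).1 = [rb 0] := rfl
      rw [e0]
      omega
    | succ t =>
      intro x hx κ
      rw [hist_succ2] at hx
      have h1 := hpr (S (hist t).1) x hx κ
      have h2 := hS (hist t).1 (rb (t + 1)) κ
      have h3 := hconn.dist_triangle (u := S (hist t).1 κ)
        (v := S (rb (t + 1) :: (hist t).1) κ) (w := x)
      rw [hist_succ1]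
      omega
  let wl : ℕ → List V := fun t =>
    (route (pg (S (hist t).1)) (hist t).2 (hist (t + 1)).2).support
  refine ⟨rb, wl, ⟨?_, ?_⟩, ?_⟩
  · -- initial safety
    intro κ
    have h1 := hpr (S []) (rb 0) (hmemD _) κ
    omega
  · -- the move legality
    intro t
    refine ⟨Walk.isChain_adj_support _, WcopAux.head?_support _, ?_, ?_, ?_⟩
    · exact WcopAux.getLast?_support _
    · show (route (pg (S (hist t).1)) (hist t).2 (hist (t + 1)).2).support.length ≤ s_r + 1
      rw [Walk.length_support]
      have : (route (pg (S (hist t).1)) (hist t).2 (hist (t + 1)).2).length ≤ s_r :=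
        Finset.le_sup (f := fun p : Fin T × Fin m × Fin m => (route p.1 p.2.1 p.2.2).length)
          (Finset.mem_univ (pg (S (hist t).1), (hist t).2, (hist (t + 1)).2))
      omega
    · intro u hu κ
      rw [hh t]
      rcases hroute_sub _ _ _ u hu with h | h | h
      · exact hinv t u h κ
      · exact hpg (S (hist t).1) u h κ
      · rw [hist_succ2] at h
        have := hpr (S (hist t).1) u h κ
        omega
  · -- the robber stays in a fixed ball
    intro N
    refine ⟨N, le_rfl, hconn v0 (rb N), ?_⟩
    have : G.dist v0 (rb N) ≤ X :=
      Finset.le_sup (f := fun i : Fin m => G.dist v0 (F i 0)) (Finset.mem_univ (hist N).2)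
    show G.dist v0 (rb N) ≤ ρ + 1 + X
    omega
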